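/- There do not exist nonempty open intervals I, J ⊆ ℝ and three times continuously differentiable functions α : I → ℝ and β : J → ℝ, with α(s) ≠ 0, α'(s) ≠ 0 for all s ∈ I and β(t) ≠ 0, β'(t) ≠ 0 for all t ∈ J, such that for all s ∈ I and t ∈ J both of the following hold: α'''(s)/α'(s) − 4·α''(s)/α(s) + 4·α'(s)²/α(s)² = −β'''(t)/β'(t) + 4·β''(t)/β(t) − 4·β'(t)²/β(t)², and α'''(s)/α'(s) − 2·α''(s)/α(s) = β'''(t)/β'(t) − 2·β''(t)/β(t). -/

import Mathlib

open Set

lemma aux_key {a₁ a₂ : ℝ} (hlt : a₁ < a₂) {α : ℝ → ℝ}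
    (hC : ContDiffOn ℝ 3 α (Set.Ioo a₁ a₂))
    (hne : ∀ s ∈ Set.Ioo a₁ a₂, α s ≠ 0 ∧ deriv α s ≠ 0)
    {c d : ℝ}
    (hF : ∀ s ∈ Set.Ioo a₁ a₂,
      deriv (deriv (deriv α)) s / deriv α s - 4 * deriv (deriv α) s / α s
        + 4 * (deriv α s) ^ 2 / (α s) ^ 2 = c)
    (hH : ∀ s ∈ Set.Ioo a₁ a₂,
      deriv (deriv (deriv α)) s / deriv α s - 2 * deriv (deriv α) s / α s = d) :
    c = -d ∧ d < 0 := by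
  have hI : IsOpen (Set.Ioo a₁ a₂) := isOpen_Ioo
  obtain ⟨e, he⟩ : ∃ e : ℝ, e = c - d := ⟨c - d, rfl⟩
  -- differentiability facts
  have h1 : ∀ s ∈ Set.Ioo a₁ a₂, DifferentiableAt ℝ α s := fun s hs =>
    (hC.differentiableOn (by norm_num) s hs).differentiableAt (hI.mem_nhds hs)
  have hC2 : ContDiffOn ℝ 2 (deriv α) (Set.Ioo a₁ a₂) :=
    hC.deriv_of_isOpen hI (by norm_num)
  have h2 : ∀ s ∈ Set.Ioo a₁ a₂, DifferentiableAt ℝ (deriv α) s := fun s hs =>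
    (hC2.differentiableOn (by norm_num) s hs).differentiableAt (hI.mem_nhds hs)
  have hC3 : ContDiffOn ℝ 1 (deriv (deriv α)) (Set.Ioo a₁ a₂) :=
    hC2.deriv_of_isOpen hI (by norm_num)
  have h3 : ∀ s ∈ Set.Ioo a₁ a₂, DifferentiableAt ℝ (deriv (deriv α)) s := fun s hs =>
    (hC3.differentiableOn (by norm_num) s hs).differentiableAt (hI.mem_nhds hs)
  -- identity (1)
  have eq1 : ∀ s ∈ Set.Ioo a₁ a₂,
      2 * deriv (deriv α) s * α s = 4 * (deriv α s) ^ 2 - e * (α s) ^ 2 := by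
    intro s hs
    obtain ⟨hα, hα'⟩ := hne s hs
    have key : (deriv (deriv (deriv α)) s / deriv α s - 4 * deriv (deriv α) s / α s
          + 4 * (deriv α s) ^ 2 / (α s) ^ 2)
        - (deriv (deriv (deriv α)) s / deriv α s - 2 * deriv (deriv α) s / α s)
        = e := by rw [hF s hs, hH s hs, he]
    field_simp at key
    have key2 : (2 * deriv (deriv α) s * α s) * ((deriv α s) ^ 2 * (α s) ^ 2)
        = (4 * (deriv α s) ^ 2 - e * (α s) ^ 2) * ((deriv α s) ^ 2 * (α s) ^ 2) := by
      linear_combination (-(deriv α s * α s ^ 2)) * key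
    exact mul_right_cancel₀ (by positivity) key2
  -- identity (2)
  have eq2 : ∀ s ∈ Set.Ioo a₁ a₂,
      deriv (deriv (deriv α)) s * α s
        = d * deriv α s * α s + 2 * deriv (deriv α) s * deriv α s := by
    intro s hs
    obtain ⟨hα, hα'⟩ := hne s hs
    have hHs := hH s hs
    field_simp at hHs
    linear_combination hHs
  -- identity (3): derivative of (1)
  have eq3 : ∀ s ∈ Set.Ioo a₁ a₂,
      deriv (deriv (deriv α)) s * α s + deriv (deriv α) s * deriv α s
        = 4 * deriv α s * deriv (deriv α) s - e * α s * deriv α s := by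
    intro s hs
    have HD1 := (h1 s hs).hasDerivAt
    have HD2 := (h2 s hs).hasDerivAt
    have HD3 := (h3 s hs).hasDerivAt
    have t1 := (HD3.const_mul (2:ℝ)).mul HD1
    have t2 := ((HD2.pow 2).const_mul (4:ℝ)).sub ((HD1.pow 2).const_mul e)
    have hder := t1.sub t2
    have hzero : deriv (fun x => 2 * deriv (deriv α) x * α x
        - (4 * (deriv α x) ^ 2 - e * (α x) ^ 2)) s = 0 := by
      have hev : (fun x => 2 * deriv (deriv α) x * α x
          - (4 * (deriv α x) ^ 2 - e * (α x) ^ 2)) =ᶠ[nhds s] (fun _ => (0:ℝ)) := by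
        filter_upwards [hI.mem_nhds hs] with x hx
        have := eq1 x hx
        linarith
      rw [hev.deriv_eq]
      simp
    have hval : deriv (fun x => 2 * deriv (deriv α) x * α x
        - (4 * (deriv α x) ^ 2 - e * (α x) ^ 2)) s = _ := hder.deriv
    rw [hzero] at hval
    push_cast at hval
    nlinarith [hval]
  -- identity (4)
  have eq4 : ∀ s ∈ Set.Ioo a₁ a₂, deriv (deriv α) s = (d + e) * α s := by
    intro s hs
    obtain ⟨hα, hα'⟩ := hne s hs
    have h2s := eq2 s hs
    have h3s := eq3 s hs
    have : deriv (deriv α) s * deriv α s = ((d + e) * α s) * deriv α s := by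
      linear_combination h2s - h3s
    exact mul_right_cancel₀ hα' this
  -- identity (5)
  have eq5 : ∀ s ∈ Set.Ioo a₁ a₂,
      4 * (deriv α s) ^ 2 = (2 * d + 3 * e) * (α s) ^ 2 := by
    intro s hs
    have h1s := eq1 s hs
    have h4s := eq4 s hs
    linear_combination 2 * α s * h4s - h1s
  -- identity (6): derivative of (5)
  obtain ⟨s₀, hs₀⟩ : ∃ s, s ∈ Set.Ioo a₁ a₂ := ⟨(a₁ + a₂) / 2, by constructor <;> linarith⟩
  have eq6 : 8 * deriv α s₀ * deriv (deriv α) s₀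
      = (2 * d + 3 * e) * (2 * α s₀ * deriv α s₀) := by
    have HD1 := (h1 s₀ hs₀).hasDerivAt
    have HD2 := (h2 s₀ hs₀).hasDerivAt
    have hder := ((HD2.pow 2).const_mul (4:ℝ)).sub ((HD1.pow 2).const_mul (2 * d + 3 * e))
    have hzero : deriv (fun x => 4 * (deriv α x) ^ 2 - (2 * d + 3 * e) * (α x) ^ 2) s₀
        = 0 := by
      have hev : (fun x => 4 * (deriv α x) ^ 2 - (2 * d + 3 * e) * (α x) ^ 2)
          =ᶠ[nhds s₀] (fun _ => (0:ℝ)) := by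
        filter_upwards [hI.mem_nhds hs₀] with x hx
        have := eq5 x hx
        linarith
      rw [hev.deriv_eq]
      simp
    have hval : deriv (fun x => 4 * (deriv α x) ^ 2 - (2 * d + 3 * e) * (α x) ^ 2) s₀
        = _ := hder.deriv
    rw [hzero] at hval
    push_cast at hval
    nlinarith [hval]
  obtain ⟨hα, hα'⟩ := hne s₀ hs₀
  have h4 := eq4 s₀ hs₀
  have h5 := eq5 s₀ hs₀
  have step : 4 * deriv (deriv α) s₀ = (2 * d + 3 * e) * α s₀ := by
    have : (4 * deriv (deriv α) s₀) * (2 * deriv α s₀)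
        = ((2 * d + 3 * e) * α s₀) * (2 * deriv α s₀) := by linear_combination eq6
    exact mul_right_cancel₀ (by simpa using hα') this
  have hed : e = -2 * d := by
    have h' : (4 * (d + e)) * α s₀ = (2 * d + 3 * e) * α s₀ := by
      rw [← step, h4]; ring
    have := mul_right_cancel₀ hα h'
    linarith
  have hcd : c = -d := by rw [hed] at he; linarith
  refine ⟨hcd, ?_⟩
  have hD1sq : (0:ℝ) < (deriv α s₀) ^ 2 := by positivity
  have hαsq : (0:ℝ) < (α s₀) ^ 2 := by positivity
  rw [hed] at h5
  nlinarith

theorem no_separated_solutions :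
    ¬ ∃ (a₁ a₂ b₁ b₂ : ℝ) (α β : ℝ → ℝ),
      a₁ < a₂ ∧ b₁ < b₂ ∧
      ContDiffOn ℝ 3 α (Set.Ioo a₁ a₂) ∧ ContDiffOn ℝ 3 β (Set.Ioo b₁ b₂) ∧
      (∀ s ∈ Set.Ioo a₁ a₂, α s ≠ 0 ∧ deriv α s ≠ 0) ∧
      (∀ t ∈ Set.Ioo b₁ b₂, β t ≠ 0 ∧ deriv β t ≠ 0) ∧
      (∀ s ∈ Set.Ioo a₁ a₂, ∀ t ∈ Set.Ioo b₁ b₂,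
        deriv (deriv (deriv α)) s / deriv α s - 4 * deriv (deriv α) s / α s
            + 4 * (deriv α s) ^ 2 / (α s) ^ 2
          = -(deriv (deriv (deriv β)) t) / deriv β t + 4 * deriv (deriv β) t / β t
            - 4 * (deriv β t) ^ 2 / (β t) ^ 2) ∧
      (∀ s ∈ Set.Ioo a₁ a₂, ∀ t ∈ Set.Ioo b₁ b₂,
        deriv (deriv (deriv α)) s / deriv α s - 2 * deriv (deriv α) s / α s
          = deriv (deriv (deriv β)) t / deriv β t - 2 * deriv (deriv β) t / β t) := by
  rintro ⟨a₁, a₂, b₁, b₂, α, β, ha, hb, hCα, hCβ, hneα, hneβ, heq1, heq2⟩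
  obtain ⟨t₀, ht₀⟩ : ∃ t, t ∈ Set.Ioo b₁ b₂ := ⟨(b₁ + b₂) / 2, by constructor <;> linarith⟩
  obtain ⟨s₀, hs₀⟩ : ∃ s, s ∈ Set.Ioo a₁ a₂ := ⟨(a₁ + a₂) / 2, by constructor <;> linarith⟩
  obtain ⟨c, hc⟩ : ∃ c : ℝ, c = -(deriv (deriv (deriv β)) t₀) / deriv β t₀
      + 4 * deriv (deriv β) t₀ / β t₀ - 4 * (deriv β t₀) ^ 2 / (β t₀) ^ 2 := ⟨_, rfl⟩
  obtain ⟨d, hd⟩ : ∃ d : ℝ, d = deriv (deriv (deriv β)) t₀ / deriv β t₀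
      - 2 * deriv (deriv β) t₀ / β t₀ := ⟨_, rfl⟩
  have hFα : ∀ s ∈ Set.Ioo a₁ a₂,
      deriv (deriv (deriv α)) s / deriv α s - 4 * deriv (deriv α) s / α s
        + 4 * (deriv α s) ^ 2 / (α s) ^ 2 = c := by
    intro s hs; rw [hc]; exact heq1 s hs t₀ ht₀
  have hHα : ∀ s ∈ Set.Ioo a₁ a₂,
      deriv (deriv (deriv α)) s / deriv α s - 2 * deriv (deriv α) s / α s = d := by
    intro s hs; rw [hd]; exact heq2 s hs t₀ ht₀
  obtain ⟨hcd, hdneg⟩ := aux_key ha hCα hneα hFα hHα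
  have hFβ : ∀ t ∈ Set.Ioo b₁ b₂,
      deriv (deriv (deriv β)) t / deriv β t - 4 * deriv (deriv β) t / β t
        + 4 * (deriv β t) ^ 2 / (β t) ^ 2 = -c := by
    intro t ht
    have h := heq1 s₀ hs₀ t ht
    rw [neg_div] at h
    have h0 := hFα s₀ hs₀
    rw [h0] at h
    linarith
  have hHβ : ∀ t ∈ Set.Ioo b₁ b₂,
      deriv (deriv (deriv β)) t / deriv β t - 2 * deriv (deriv β) t / β t = d := by
    intro t ht
    have h := heq2 s₀ hs₀ t ht
    have h0 := hHα s₀ hs₀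
    rw [h0] at h
    linarith
  obtain ⟨hcd', _⟩ := aux_key hb hCβ hneβ hFβ hHβ
  have : c = d := by linarith
  linarith
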